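/- In X = ℝ², let A be the linear map with matrix β·[[0,1],[−1,0]] (β > 0) and let B = μ·Id + N_{{0}×ℝ} (μ > 0). Then the Douglas–Rachford operator T = (1/2)(Id + R_B R_A) is the linear map (1/(β²+1))·[[β², β],[β(1−μ)/(1+μ), (1+β²μ)/(1+μ)]], and its operator norm equals (1/(2(1+μ)))·(√(2μ² + 2μ + 1 + 2(1 − 2/(1+β²))μ(1+μ)) + 1), which is strictly less than 1. -/

import Mathlib

private lemma aux_AC (β μ s : ℝ)
    (hrel : (β^2+1)*s^2 = (β^2+1)*(2*μ+1)^2 - 4*μ*(1+μ)) :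
    ((s+1)^2*(β^2+1)^2 - 4*((β^2*(1+μ))^2 + (β*(1-μ))^2)) *
      ((s+1)^2*(β^2+1)^2 - 4*((β*(1+μ))^2 + (1+β^2*μ)^2))
    = (-(4*(β^2*(1+μ)*(β*(1+μ)) + β*(1-μ)*(1+β^2*μ))))^2 := by
  linear_combination (3 + 4*s + s^2 + 9*β^2 + 12*β^2*s + 3*β^2*s^2 - 4*β^2*μ - 4*β^2*μ^2
    + 9*β^4 + 12*β^4*s + 3*β^4*s^2 - 8*β^4*μ - 8*β^4*μ^2 + 3*β^6 + 4*β^6*s + β^6*s^2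
    - 4*β^6*μ - 4*β^6*μ^2) * hrel

private lemma aux_pos (β μ s : ℝ) (hβ : 0 < β) (hμ : 0 < μ) (hs1 : 1 < s)
    (hrel : (β^2+1)*s^2 = (β^2+1)*(2*μ+1)^2 - 4*μ*(1+μ)) :
    0 < (s+1)^2*(β^2+1)^2 - 4*((β^2*(1+μ))^2 + (β*(1-μ))^2) := by
  have hA2 : (s+1)^2*(β^2+1)^2 - 4*((β^2*(1+μ))^2 + (β*(1-μ))^2)
      = 2*(β^2+1)^2*s + 2*(1 + 6*β^2*μ - β^4 - 2*β^4*μ) := by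
    linear_combination (1+β^2) * hrel
  rw [hA2]
  rcases le_or_gt 0 (1 + 6*β^2*μ - β^4 - 2*β^4*μ) with h | h
  · nlinarith [sq_nonneg β, sq_nonneg (β^2+1)]
  · have hW : β^2*(1+3*μ)+1-μ ≠ 0 := by
      intro h0
      have h1 : (1-3*β^2)*(1 + 6*β^2*μ - β^4 - 2*β^4*μ)
          = (1+β^2)^3 + (2*β^4-6*β^2)*(β^2*(1+3*μ)+1-μ) := by ring
      have h2 : μ*(1-3*β^2) = (1+β^2) - (β^2*(1+3*μ)+1-μ) := by ring
      rw [h0] at h1 h2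
      nlinarith [pow_pos (show (0:ℝ) < 1+β^2 by positivity) 3, hμ, h]
    have hW2 : 0 < (β^2*(1+3*μ)+1-μ)^2 := by positivity
    have key : ((β^2+1)^2*s)^2
        = (1 + 6*β^2*μ - β^4 - 2*β^4*μ)^2 + 4*β^2*(β^2*(1+3*μ)+1-μ)^2 := by
      linear_combination (β^2+1)^3 * hrel
    have hp2s : 0 < (β^2+1)^2*s := by
      have hs0 : (0:ℝ) < s := lt_trans one_pos hs1
      positivity
    have h4 : 0 < 4*β^2*(β^2*(1+3*μ)+1-μ)^2 := by positivity
    have h5 : (-(1 + 6*β^2*μ - β^4 - 2*β^4*μ))^2 < ((β^2+1)^2*s)^2 := by nlinarith [key, h4]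
    have h6 := lt_of_pow_lt_pow_left₀ 2 hp2s.le h5
    linarith

private lemma aux_upper (β μ s x0 x1 : ℝ) (hβ : 0 < β) (hμ : 0 < μ) (hs1 : 1 < s)
    (hrel : (β^2+1)*s^2 = (β^2+1)*(2*μ+1)^2 - 4*μ*(1+μ)) :
    4*((β^2*(1+μ)*x0 + β*(1+μ)*x1)^2 + (β*(1-μ)*x0 + (1+β^2*μ)*x1)^2)
      ≤ (s+1)^2*(β^2+1)^2*(x0^2+x1^2) := by
  have h := aux_AC β μ s hrel
  have h2 := aux_pos β μ s hβ hμ hs1 hrel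
  have key : ((s+1)^2*(β^2+1)^2 - 4*((β^2*(1+μ))^2 + (β*(1-μ))^2)) *
      ((s+1)^2*(β^2+1)^2*(x0^2+x1^2)
        - 4*((β^2*(1+μ)*x0 + β*(1+μ)*x1)^2 + (β*(1-μ)*x0 + (1+β^2*μ)*x1)^2))
      = (((s+1)^2*(β^2+1)^2 - 4*((β^2*(1+μ))^2 + (β*(1-μ))^2))*x0
          + (-(4*(β^2*(1+μ)*(β*(1+μ)) + β*(1-μ)*(1+β^2*μ))))*x1)^2 := by
    linear_combination x1^2 * h
  by_contra hlt
  push_neg at hlt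
  have hneg := mul_neg_of_pos_of_neg h2 (by linarith :
      (s+1)^2*(β^2+1)^2*(x0^2+x1^2)
        - 4*((β^2*(1+μ)*x0 + β*(1+μ)*x1)^2 + (β*(1-μ)*x0 + (1+β^2*μ)*x1)^2) < 0)
  rw [key] at hneg
  exact absurd hneg (not_lt.mpr (sq_nonneg _))

private lemma aux_eig (β μ s v0 v1 : ℝ)
    (hv0 : v0 = 4*(β^2*(1+μ)*(β*(1+μ)) + β*(1-μ)*(1+β^2*μ)))
    (hv1 : v1 = (s+1)^2*(β^2+1)^2 - 4*((β^2*(1+μ))^2 + (β*(1-μ))^2))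
    (hrel : (β^2+1)*s^2 = (β^2+1)*(2*μ+1)^2 - 4*μ*(1+μ)) :
    4*((β^2*(1+μ)*v0 + β*(1+μ)*v1)^2 + (β*(1-μ)*v0 + (1+β^2*μ)*v1)^2)
      = (s+1)^2*(β^2+1)^2*(v0^2+v1^2) := by
  subst hv0 hv1
  linear_combination (-3 - 10*s - 12*s^2 - 6*s^3 - s^4 - 3*β^2 - 34*β^2*s - 56*β^2*s^2
    - 30*β^2*s^3 - 5*β^2*s^4 - 20*β^2*μ - 24*β^2*μ*s - 4*β^2*μ*s^2 + 16*β^2*μ^2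
    + 24*β^2*μ^2*s + 8*β^2*μ^2*s^2 + 18*β^4 - 36*β^4*s - 104*β^4*s^2 - 60*β^4*s^3
    - 10*β^4*s^4 - 48*β^4*μ - 32*β^4*μ*s + 80*β^4*μ^2 + 96*β^4*μ^2*s + 32*β^4*μ^2*s^2
    + 16*β^4*μ^3 - 16*β^4*μ^4 + 42*β^6 - 4*β^6*s - 96*β^6*s^2 - 60*β^6*s^3 - 10*β^6*s^4
    - 24*β^6*μ + 48*β^6*μ*s + 24*β^6*μ*s^2 + 80*β^6*μ^2 + 144*β^6*μ^2*s + 48*β^6*μ^2*s^2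
    - 16*β^6*μ^3 - 48*β^6*μ^4 + 33*β^8 + 14*β^8*s - 44*β^8*s^2 - 30*β^8*s^3 - 5*β^8*s^4
    + 16*β^8*μ + 96*β^8*μ*s + 32*β^8*μ*s^2 - 16*β^8*μ^2 + 96*β^8*μ^2*s + 32*β^8*μ^2*s^2
    - 80*β^8*μ^3 - 48*β^8*μ^4 + 9*β^10 + 6*β^10*s - 8*β^10*s^2 - 6*β^10*s^3 - β^10*s^4
    + 12*β^10*μ + 40*β^10*μ*s + 12*β^10*μ*s^2 - 32*β^10*μ^2 + 24*β^10*μ^2*s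
    + 8*β^10*μ^2*s^2 - 48*β^10*μ^3 - 16*β^10*μ^4) * hrel


set_option maxHeartbeats 1000000 in
theorem stmt_19 (β μ : ℝ) (hβ : 0 < β) (hμ : 0 < μ)
    (MA RA RB T : Matrix (Fin 2) (Fin 2) ℝ)
    (hMA : MA = β • !![0, 1; -1, 0])
    (hRA : RA = 2 • (1 + MA)⁻¹ - 1)
    (hRB : RB = !![-1, 0; 0, (1 - μ) / (1 + μ)])
    (hT : T = (1 / 2 : ℝ) • (1 + RB * RA)) :
    T = (1 / (β ^ 2 + 1)) •
        !![β ^ 2, β; β * (1 - μ) / (1 + μ), (1 + β ^ 2 * μ) / (1 + μ)] ∧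
      ‖Matrix.toEuclideanCLM (𝕜 := ℝ) T‖ =
        (1 / (2 * (1 + μ))) *
          (Real.sqrt (2 * μ ^ 2 + 2 * μ + 1 +
              2 * (1 - 2 / (1 + β ^ 2)) * μ * (1 + μ)) + 1) ∧
      (1 / (2 * (1 + μ))) *
          (Real.sqrt (2 * μ ^ 2 + 2 * μ + 1 +
              2 * (1 - 2 / (1 + β ^ 2)) * μ * (1 + μ)) + 1) < 1 := by
  have hm : (0:ℝ) < 1 + μ := by positivity
  have hp : (0:ℝ) < β^2 + 1 := by positivity
  have hm0 : (1:ℝ) + μ ≠ 0 := hm.ne'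
  have hp0 : (β:ℝ)^2 + 1 ≠ 0 := hp.ne'
  -- Part 1
  have hInv : (1 + MA)⁻¹ = (1/(β^2+1)) • !![1, -β; β, 1] := by
    apply Matrix.inv_eq_right_inv
    subst hMA
    ext i j
    fin_cases i <;> fin_cases j <;>
      simp [Matrix.mul_apply, Fin.sum_univ_two, Matrix.one_apply] <;>
      field_simp <;> ring
  have hRAval : RA = (1/(β^2+1)) • !![1-β^2, -(2*β); 2*β, 1-β^2] := by
    rw [hRA, hInv]
    ext i j
    fin_cases i <;> fin_cases j <;>
      simp [Matrix.sub_apply, Matrix.one_apply] <;>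
      field_simp <;> ring
  have hTval : T = (1 / (β ^ 2 + 1)) •
      !![β ^ 2, β; β * (1 - μ) / (1 + μ), (1 + β ^ 2 * μ) / (1 + μ)] := by
    rw [hT, hRB, hRAval]
    ext i j
    fin_cases i <;> fin_cases j <;>
      simp [Matrix.mul_apply, Fin.sum_univ_two, Matrix.one_apply] <;>
      field_simp <;> ring
  refine ⟨hTval, ?_, ?_⟩
  · -- norm
    set D : ℝ := 2 * μ ^ 2 + 2 * μ + 1 + 2 * (1 - 2 / (1 + β ^ 2)) * μ * (1 + μ) with hD
    set s : ℝ := Real.sqrt D with hsdef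
    have hD1 : D = 1 + (4*μ*(1+μ)*β^2)/(1+β^2) + 0 := by
      rw [hD]; field_simp; ring
    have hDgt1 : 1 < D := by
      rw [hD1]
      have : 0 < (4*μ*(1+μ)*β^2)/(1+β^2) := by positivity
      linarith
    have hs2 : s^2 = D := Real.sq_sqrt (by linarith)
    have hs1 : 1 < s := by
      nlinarith [Real.sqrt_nonneg D, hs2, hDgt1]
    have hs0 : (0:ℝ) < s := lt_trans one_pos hs1
    have hrel : (β^2+1)*s^2 = (β^2+1)*(2*μ+1)^2 - 4*μ*(1+μ) := by
      rw [hs2, hD]; field_simp; ring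
    have hσ0 : 0 ≤ (1 / (2 * (1 + μ))) * (s + 1) := by positivity
    -- entries
    have hT00 : T 0 0 = 1/(β^2+1) * β^2 := by rw [hTval]; simp
    have hT01 : T 0 1 = 1/(β^2+1) * β := by rw [hTval]; simp
    have hT10 : T 1 0 = 1/(β^2+1) * (β * (1-μ) / (1+μ)) := by rw [hTval]; simp
    have hT11 : T 1 1 = 1/(β^2+1) * ((1+β^2*μ) / (1+μ)) := by rw [hTval]; simp
    -- application formula
    have happ : ∀ x : EuclideanSpace ℝ (Fin 2),
        ‖Matrix.toEuclideanCLM (𝕜 := ℝ) T x‖^2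
          = (T 0 0 * x 0 + T 0 1 * x 1)^2 + (T 1 0 * x 0 + T 1 1 * x 1)^2 := by
      intro x
      have h : ∀ i, (Matrix.toEuclideanCLM (𝕜 := ℝ) T x) i
          = T i 0 * x 0 + T i 1 * x 1 := by
        intro i
        show Matrix.toLin' T (WithLp.equiv _ _ x) i = _
        simp [Matrix.mulVec, dotProduct, Fin.sum_univ_two]
      rw [EuclideanSpace.norm_eq, Real.sq_sqrt (by positivity), Fin.sum_univ_two, h 0, h 1]
      simp [sq_abs]
    have hxnorm : ∀ x : EuclideanSpace ℝ (Fin 2), ‖x‖^2 = x 0^2 + x 1^2 := by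
      intro x
      rw [EuclideanSpace.norm_eq, Real.sq_sqrt (by positivity), Fin.sum_univ_two]
      simp [sq_abs]
    apply le_antisymm
    · apply ContinuousLinearMap.opNorm_le_bound _ hσ0
      intro x
      have hsq : ‖Matrix.toEuclideanCLM (𝕜 := ℝ) T x‖^2
          ≤ ((1 / (2 * (1 + μ))) * (s + 1) * ‖x‖)^2 := by
        rw [happ x, mul_pow, mul_pow, hxnorm x, hT00, hT01, hT10, hT11]
        have haux := aux_upper β μ s (x 0) (x 1) hβ hμ hs1 hrel
        have e1 : (1/(β^2+1) * β^2 * x 0 + 1/(β^2+1) * β * x 1)^2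
            + (1/(β^2+1) * (β * (1-μ) / (1+μ)) * x 0 + 1/(β^2+1) * ((1+β^2*μ) / (1+μ)) * x 1)^2
            = (4*((β^2*(1+μ)*(x 0) + β*(1+μ)*(x 1))^2 + (β*(1-μ)*(x 0) + (1+β^2*μ)*(x 1))^2))
              / (4*(1+μ)^2*(β^2+1)^2) := by
          field_simp
        have e2 : (1 / (2 * (1 + μ)))^2 * (s + 1)^2 * (x 0^2 + x 1^2)
            = ((s+1)^2*(β^2+1)^2*((x 0)^2+(x 1)^2)) / (4*(1+μ)^2*(β^2+1)^2) := by
          field_simp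
          ring
        rw [e1, e2]
        exact div_le_div_of_nonneg_right haux (by positivity) |>.trans_eq rfl
      have h1 : (0:ℝ) ≤ (1 / (2 * (1 + μ))) * (s + 1) * ‖x‖ :=
        mul_nonneg hσ0 (norm_nonneg _)
      nlinarith [norm_nonneg (Matrix.toEuclideanCLM (𝕜 := ℝ) T x), hsq, h1]
    · -- lower bound via eigenvector
      set v0 : ℝ := 4*(β^2*(1+μ)*(β*(1+μ)) + β*(1-μ)*(1+β^2*μ)) with hv0
      set v1 : ℝ := (s+1)^2*(β^2+1)^2 - 4*((β^2*(1+μ))^2 + (β*(1-μ))^2) with hv1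
      have hApos := aux_pos β μ s hβ hμ hs1 hrel
      rw [← hv1] at hApos
      set v : EuclideanSpace ℝ (Fin 2) := (WithLp.equiv 2 (Fin 2 → ℝ)).symm ![v0, v1] with hv
      have hvc0 : v 0 = v0 := rfl
      have hvc1 : v 1 = v1 := rfl
      have hvne : v ≠ 0 := by
        intro h0
        have : v 1 = 0 := by rw [h0]; rfl
        rw [hvc1] at this
        exact hApos.ne' this
      have hvpos : 0 < ‖v‖ := norm_pos_iff.mpr hvne
      have heig := aux_eig β μ s v0 v1 hv0 hv1 hrel
      have hfv2 : ‖Matrix.toEuclideanCLM (𝕜 := ℝ) T v‖^2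
          = ((1 / (2 * (1 + μ))) * (s + 1) * ‖v‖)^2 := by
        rw [happ v, mul_pow, mul_pow, hxnorm v, hvc0, hvc1, hT00, hT01, hT10, hT11]
        have e1 : (1/(β^2+1) * β^2 * v0 + 1/(β^2+1) * β * v1)^2
            + (1/(β^2+1) * (β * (1-μ) / (1+μ)) * v0 + 1/(β^2+1) * ((1+β^2*μ) / (1+μ)) * v1)^2
            = (4*((β^2*(1+μ)*v0 + β*(1+μ)*v1)^2 + (β*(1-μ)*v0 + (1+β^2*μ)*v1)^2))
              / (4*(1+μ)^2*(β^2+1)^2) := by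
          field_simp
        have e2 : (1 / (2 * (1 + μ)))^2 * (s + 1)^2 * (v0^2 + v1^2)
            = ((s+1)^2*(β^2+1)^2*(v0^2+v1^2)) / (4*(1+μ)^2*(β^2+1)^2) := by
          field_simp
          ring
        rw [e1, e2, heig]
      have hfv : ‖Matrix.toEuclideanCLM (𝕜 := ℝ) T v‖
          = (1 / (2 * (1 + μ))) * (s + 1) * ‖v‖ := by
        have h1 : (0:ℝ) ≤ (1 / (2 * (1 + μ))) * (s + 1) * ‖v‖ :=
          mul_nonneg hσ0 (norm_nonneg _)
        exact (pow_left_inj₀ (norm_nonneg _) h1 two_ne_zero).mp hfv2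
      have hle := (Matrix.toEuclideanCLM (𝕜 := ℝ) T).le_opNorm v
      rw [hfv] at hle
      exact le_of_mul_le_mul_right hle hvpos
  · -- strict bound
    have h4 : 0 < 4*μ*(1+μ)/(1+β^2) := by positivity
    have heq : (2*μ+1)^2 - (2 * μ ^ 2 + 2 * μ + 1 + 2 * (1 - 2 / (1 + β ^ 2)) * μ * (1 + μ))
        = 4*μ*(1+μ)/(1+β^2) := by field_simp; ring
    have hslt : Real.sqrt (2 * μ ^ 2 + 2 * μ + 1 + 2 * (1 - 2 / (1 + β ^ 2)) * μ * (1 + μ))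
        < 2*μ+1 := by
      apply (Real.sqrt_lt' (by positivity)).mpr
      linarith
    rw [div_mul_eq_mul_div, div_lt_one (by positivity)]
    linarith
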